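/- Let K ∈ ℝ^{n×n} be symmetric positive definite, ψ ∈ ℝⁿ with ψ_v ∈ {−1,1}, K_ψ = diag(ψ)·K·diag(ψ), W = {w_1,…,w_N} distinct indices, y ∈ ℝⁿ, and γ > 0. Let y*_v = Σ_i c_i K_ψ(v,w_i) with c = ((K_ψ)_W + γN·I_N)⁻¹ y|_W be the RLS solution, where y|_W = (y(w_1),…,y(w_N))ᵀ. Then for every node v, |y(v) − y*_v| ≤ (P_{W,K}(v) + γN·√(K(v,v)) / (λ_min(K_W) + γN)) · ‖y‖_{K_ψ}, where P_{W,K}(v) = √(K(v,v) − k_vᵀ (K_W)⁻¹ k_v) with k_v = (K(v,w_i))_{i=1}^N is the power function, λ_min(K_W) is the smallest eigenvalue of K_W, and ‖y‖_{K_ψ} = √(yᵀ (K_ψ)⁻¹ y). -/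

import Mathlib

open Matrix

private lemma aux_dot_self_nonneg {k : ℕ} (x : Fin k → ℝ) : 0 ≤ x ⬝ᵥ x :=
  Finset.sum_nonneg fun i _ => mul_self_nonneg _

private lemma aux_dot_cs {k : ℕ} (a b : Fin k → ℝ) : (a ⬝ᵥ b)^2 ≤ (a ⬝ᵥ a) * (b ⬝ᵥ b) := by
  simpa [dotProduct, sq] using Finset.sum_mul_sq_le_sq_mul_sq Finset.univ a b

private lemma aux_cs {k : ℕ} (M : Matrix (Fin k) (Fin k) ℝ) (hsym : Mᵀ = M)
    (hpsd : ∀ z, 0 ≤ z ⬝ᵥ (M *ᵥ z)) (a b : Fin k → ℝ) :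
    (a ⬝ᵥ (M *ᵥ b))^2 ≤ (a ⬝ᵥ (M *ᵥ a)) * (b ⬝ᵥ (M *ᵥ b)) := by
  have hba : b ⬝ᵥ (M *ᵥ a) = a ⬝ᵥ (M *ᵥ b) := by
    rw [Matrix.dotProduct_mulVec]
    conv_lhs => rw [show M = Mᵀᵀ by rw [hsym, hsym], Matrix.vecMul_transpose]
    rw [hsym, dotProduct_comm]
  have key : ∀ t : ℝ, 0 ≤ (b ⬝ᵥ (M *ᵥ b)) * (t*t) + (2*(a ⬝ᵥ (M *ᵥ b))) * t + (a ⬝ᵥ (M *ᵥ a)) := by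
    intro t
    have h0 := hpsd (a + t • b)
    simp only [Matrix.mulVec_add, Matrix.mulVec_smul, dotProduct_add,
      add_dotProduct, dotProduct_smul, smul_dotProduct, smul_eq_mul] at h0
    rw [hba] at h0
    nlinarith [h0]
  have hd := discrim_le_zero key
  rw [discrim] at hd
  nlinarith [hd]

private lemma aux_inv_bound {k : ℕ} (M : Matrix (Fin k) (Fin k) ℝ) (hMr : M * M⁻¹ = 1)
    {μ : ℝ} (hμ : 0 < μ) (hlow : ∀ z, μ * (z ⬝ᵥ z) ≤ z ⬝ᵥ (M *ᵥ z)) (x : Fin k → ℝ) :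
    0 ≤ x ⬝ᵥ (M⁻¹ *ᵥ x) ∧ μ * (x ⬝ᵥ (M⁻¹ *ᵥ x)) ≤ x ⬝ᵥ x := by
  set u := M⁻¹ *ᵥ x with hu
  have hMu : M *ᵥ u = x := by rw [hu, Matrix.mulVec_mulVec, hMr, Matrix.one_mulVec]
  have h1 : μ * (u ⬝ᵥ u) ≤ u ⬝ᵥ x := by have := hlow u; rwa [hMu] at this
  have h2 : (u ⬝ᵥ x)^2 ≤ (u ⬝ᵥ u) * (x ⬝ᵥ x) := aux_dot_cs u x
  have hxu : x ⬝ᵥ u = u ⬝ᵥ x := dotProduct_comm x u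
  have huu : 0 ≤ u ⬝ᵥ u := aux_dot_self_nonneg u
  have hxx : 0 ≤ x ⬝ᵥ x := aux_dot_self_nonneg x
  have hux : 0 ≤ u ⬝ᵥ x := le_trans (by positivity) h1
  constructor
  · rw [hxu]; exact hux
  · rw [hxu]
    have h3 : μ * (μ * (u ⬝ᵥ u)) ≤ μ * (u ⬝ᵥ x) := mul_le_mul_of_nonneg_left h1 hμ.le
    have h4 := mul_le_mul_of_nonneg_left h2 (mul_nonneg hμ.le hμ.le)
    have h5 := mul_le_mul_of_nonneg_right h3 hxx
    have key : (μ * (u ⬝ᵥ x))^2 ≤ (μ * (u ⬝ᵥ x)) * (x ⬝ᵥ x) := by nlinarith [h4, h5]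
    rcases hux.eq_or_lt with h | h
    · rw [← h, mul_zero]; exact hxx
    · have ha : 0 < μ * (u ⬝ᵥ x) := mul_pos hμ h
      nlinarith [key, ha]

private lemma aux_lift_dot {n N : ℕ} (w : Fin N → Fin n) (x : Fin N → ℝ) (g : Fin n → ℝ) :
    (fun a => ∑ i, if a = w i then x i else 0) ⬝ᵥ g = ∑ i, x i * g (w i) := by
  simp only [dotProduct, Finset.sum_mul, ite_mul, zero_mul]
  rw [Finset.sum_comm]
  simp [Finset.sum_ite_eq']

private lemma aux_mulVec_lift {n N : ℕ} (M : Matrix (Fin n) (Fin n) ℝ) (w : Fin N → Fin n)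
    (x : Fin N → ℝ) (a : Fin n) :
    (M *ᵥ fun b => ∑ i, if b = w i then x i else 0) a = ∑ i, M a (w i) * x i := by
  simp only [Matrix.mulVec, dotProduct, Finset.mul_sum, mul_ite, mul_zero]
  rw [Finset.sum_comm]
  simp [Finset.sum_ite_eq']

private lemma aux_e_dot {n : ℕ} (v : Fin n) (g : Fin n → ℝ) :
    (fun a => if a = v then (1:ℝ) else 0) ⬝ᵥ g = g v := by
  simp [dotProduct, ite_mul, Finset.sum_ite_eq']

private lemma aux_mulVec_e {n : ℕ} (M : Matrix (Fin n) (Fin n) ℝ) (v : Fin n) (a : Fin n) :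
    (M *ᵥ fun b => if b = v then (1:ℝ) else 0) a = M a v := by
  simp [Matrix.mulVec, dotProduct, mul_ite, Finset.sum_ite_eq']

private lemma aux_lmin_pos {N : ℕ} (hN : 0 < N) (KW : Matrix (Fin N) (Fin N) ℝ)
    (hpd : KW.PosDef) : ∃ μ : ℝ, 0 < μ ∧ ∀ x : Fin N → ℝ, μ * (x ⬝ᵥ x) ≤ x ⬝ᵥ (KW *ᵥ x) := by
  classical
  have hH := hpd.1
  have ne : (Finset.univ : Finset (Fin N)).Nonempty := ⟨⟨0, hN⟩, Finset.mem_univ _⟩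
  set μ := Finset.univ.inf' ne hH.eigenvalues with hμdef
  have hμpos : 0 < μ := by
    obtain ⟨i, -, hi⟩ := Finset.exists_mem_eq_inf' ne hH.eigenvalues
    rw [hμdef, hi]
    exact hpd.eigenvalues_pos i
  have hle : ∀ i, μ ≤ hH.eigenvalues i := fun i => Finset.inf'_le _ (Finset.mem_univ i)
  refine ⟨μ, hμpos, fun x => ?_⟩
  set V : Matrix (Fin N) (Fin N) ℝ := (hH.eigenvectorUnitary : Matrix (Fin N) (Fin N) ℝ) with hV
  have hVt : Vᵀ = star V := by
    rw [Matrix.star_eq_conjTranspose]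
    ext i j
    simp [Matrix.conjTranspose_apply, Matrix.transpose_apply]
  set z := star V *ᵥ x with hz
  have key1 : ∀ r : Fin N → ℝ, x ⬝ᵥ (V *ᵥ r) = z ⬝ᵥ r := by
    intro r
    rw [Matrix.dotProduct_mulVec, ← Matrix.mulVec_transpose, hVt, hz]
  have hVz : V *ᵥ z = x := by
    have h1 : V * star V = 1 := Matrix.mem_unitaryGroup_iff.mp hH.eigenvectorUnitary.2
    rw [hz, Matrix.mulVec_mulVec, h1, Matrix.one_mulVec]
  have hzz : z ⬝ᵥ z = x ⬝ᵥ x := by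
    have := key1 z
    rw [hVz] at this
    exact this.symm
  have hquad : x ⬝ᵥ (KW *ᵥ x) =
      z ⬝ᵥ ((Matrix.diagonal (RCLike.ofReal ∘ hH.eigenvalues)) *ᵥ z) := by
    conv_lhs => rw [hH.spectral_theorem, Unitary.conjStarAlgAut_apply]
    rw [← Matrix.mulVec_mulVec, ← Matrix.mulVec_mulVec, key1, hz]
  rw [hquad, ← hzz]
  simp only [dotProduct, Matrix.mulVec_diagonal, Function.comp_apply, Finset.mul_sum]
  apply Finset.sum_le_sum
  intro i _
  have : (RCLike.ofReal (hH.eigenvalues i) : ℝ) = hH.eigenvalues i := rfl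
  rw [this]
  nlinarith [hle i, mul_self_nonneg (z i), hμpos]

set_option maxHeartbeats 2000000 in
/-- Overall RLS approximation error bound for the binary-feature-augmented kernel
`K_ψ = diag(ψ) K diag(ψ)`: for the RLS solution `y*` with data `y` on the distinct nodes
`w i` and parameter `γ > 0`, every node `v` satisfies
`|y(v) − y*_v| ≤ (P_{W,K}(v) + γN √(K(v,v)) / (λ_min(K_W) + γN)) · ‖y‖_{K_ψ}`,
where `P_{W,K}(v) = √(K(v,v) − k_vᵀ K_W⁻¹ k_v)` is the power function, `λ_min(K_W)` is the
smallest eigenvalue of `K_W` (characterized as the greatest `μ` with `μ‖x‖² ≤ xᵀ K_W x`)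
and `‖y‖_{K_ψ} = √(yᵀ K_ψ⁻¹ y)`. -/
theorem stmt_19 {n N : ℕ} (K : Matrix (Fin n) (Fin n) ℝ) (hK : K.PosDef)
    (ψ : Fin n → ℝ) (hψ : ∀ v : Fin n, ψ v = 1 ∨ ψ v = -1)
    (w : Fin N → Fin n) (hw : Function.Injective w)
    (y : Fin n → ℝ) (γ : ℝ) (hγ : 0 < γ)
    (KW : Matrix (Fin N) (Fin N) ℝ)
    (hKW : KW = Matrix.of fun i j : Fin N => K (w i) (w j))
    (lmin : ℝ)
    (hlmin : IsGreatest {μ : ℝ | ∀ x : Fin N → ℝ, μ * (x ⬝ᵥ x) ≤ x ⬝ᵥ (KW *ᵥ x)} lmin)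
    (Kψ : Matrix (Fin n) (Fin n) ℝ)
    (hKψ : Kψ = Matrix.diagonal ψ * K * Matrix.diagonal ψ)
    (KψW : Matrix (Fin N) (Fin N) ℝ)
    (hKψW : KψW = Matrix.of fun i j : Fin N => Kψ (w i) (w j))
    (c : Fin N → ℝ)
    (hc : c = (KψW + (γ * (N : ℝ)) • (1 : Matrix (Fin N) (Fin N) ℝ))⁻¹ *ᵥ fun i => y (w i)) :
    ∀ v : Fin n,
      |y v - ∑ i : Fin N, c i * Kψ v (w i)| ≤
        (Real.sqrt (K v v -
            (fun i : Fin N => K v (w i)) ⬝ᵥ (KW⁻¹ *ᵥ fun i : Fin N => K v (w i))) +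
          γ * (N : ℝ) * Real.sqrt (K v v) / (lmin + γ * (N : ℝ))) *
          Real.sqrt (y ⬝ᵥ (Kψ⁻¹ *ᵥ y)) := by
  intro v
  rcases Nat.eq_zero_or_pos N with hN0 | hN
  · exfalso
    subst hN0
    have hmem : (lmin + 1) ∈ {μ : ℝ | ∀ x : Fin 0 → ℝ, μ * (x ⬝ᵥ x) ≤ x ⬝ᵥ (KW *ᵥ x)} := by
      intro x
      have h1 : x ⬝ᵥ x = 0 := by simp [dotProduct]
      have h2 : x ⬝ᵥ (KW *ᵥ x) = 0 := by simp [dotProduct]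
      rw [h1, h2, mul_zero]
    have := hlmin.2 hmem
    linarith
  classical
  set γ' : ℝ := γ * (N : ℝ) with hγ'def
  have hγ' : 0 < γ' := mul_pos hγ (by exact_mod_cast hN)
  have hKsym : ∀ a b, K a b = K b a := by
    intro a b
    conv_lhs => rw [← hK.1]
    simp [Matrix.conjTranspose_apply]
  have hψ2 : ∀ a, ψ a * ψ a = 1 := fun a => by rcases hψ a with h | h <;> rw [h] <;> norm_num
  have hKψab : ∀ a b, Kψ a b = ψ a * K a b * ψ b := by
    intro a b
    rw [hKψ, Matrix.mul_diagonal, Matrix.diagonal_mul]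
  have hKψsym : ∀ a b, Kψ a b = Kψ b a := fun a b => by
    rw [hKψab, hKψab, hKsym a b]; ring
  -- K invertible and Kψ⁻¹ explicit
  have hKdet : IsUnit K.det := hK.det_pos.ne'.isUnit
  have hKinv : K * K⁻¹ = 1 := Matrix.mul_nonsing_inv _ hKdet
  have hDD : Matrix.diagonal ψ * Matrix.diagonal ψ = (1 : Matrix (Fin n) (Fin n) ℝ) := by
    rw [Matrix.diagonal_mul_diagonal]
    have h1 : (fun i => ψ i * ψ i) = (fun _ => (1:ℝ)) := funext hψ2
    rw [h1, Matrix.diagonal_one]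
  have hKψright : Kψ * (Matrix.diagonal ψ * K⁻¹ * Matrix.diagonal ψ) = 1 := by
    rw [hKψ]
    calc Matrix.diagonal ψ * K * Matrix.diagonal ψ *
          (Matrix.diagonal ψ * K⁻¹ * Matrix.diagonal ψ)
        = Matrix.diagonal ψ * (K * ((Matrix.diagonal ψ * Matrix.diagonal ψ) *
            (K⁻¹ * Matrix.diagonal ψ))) := by
          simp only [Matrix.mul_assoc]
      _ = Matrix.diagonal ψ * (K * (K⁻¹ * Matrix.diagonal ψ)) := by rw [hDD, Matrix.one_mul]
      _ = Matrix.diagonal ψ * ((K * K⁻¹) * Matrix.diagonal ψ) := by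
          simp only [Matrix.mul_assoc]
      _ = 1 := by rw [hKinv, Matrix.one_mul, hDD]
  have hKψinv : Kψ⁻¹ = Matrix.diagonal ψ * K⁻¹ * Matrix.diagonal ψ :=
    Matrix.inv_eq_right_inv hKψright
  -- KW is positive definite
  have hKWsym : ∀ i j, KW i j = KW j i := by
    intro i j; rw [hKW]; simp only [Matrix.of_apply]; exact hKsym _ _
  have hKWpd : KW.PosDef := by
    refine Matrix.PosDef.of_dotProduct_mulVec_pos ?_ ?_
    · ext i j
      simp only [Matrix.conjTranspose_apply, star_trivial]
      exact hKWsym j i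
    · intro x hx
      have hxs : star x = x := funext fun i => star_trivial _
      set x' : Fin n → ℝ := fun a => ∑ i, if a = w i then x i else 0 with hx'
      have hx'ne : x' ≠ 0 := by
        obtain ⟨i, hi⟩ := Function.ne_iff.mp hx
        intro h0
        apply hi
        have hxi : x' (w i) = x i := by
          simp only [hx']
          rw [Finset.sum_eq_single i]
          · simp
          · intro j _ hj
            rw [if_neg]
            intro hh
            exact hj (hw hh.symm)
          · intro h; exact absurd (Finset.mem_univ i) h
        rw [h0] at hxi
        simpa using hxi.symm
      have hquad : x ⬝ᵥ (KW *ᵥ x) = x' ⬝ᵥ (K *ᵥ x') := by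
        have h1 : x' ⬝ᵥ (K *ᵥ x') = ∑ i, x i * (K *ᵥ x') (w i) := aux_lift_dot w x _
        have h2 : ∀ i, (K *ᵥ x') (w i) = ∑ j, K (w i) (w j) * x j := fun i =>
          aux_mulVec_lift K w x _
        rw [h1]
        simp_rw [h2]
        rw [hKW]
        simp [dotProduct, Matrix.mulVec, Matrix.of_apply]
      rw [hxs, hquad]
      have h := hK.dotProduct_mulVec_pos hx'ne
      rwa [show star x' = x' from funext fun i => star_trivial _] at h
  have hKWdet : IsUnit KW.det := hKWpd.det_pos.ne'.isUnit
  have hKWinv : KW * KW⁻¹ = 1 := Matrix.mul_nonsing_inv _ hKWdet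
  -- lmin is positive
  obtain ⟨μ0, hμ0pos, hμ0⟩ := aux_lmin_pos hN KW hKWpd
  have hlminpos : 0 < lmin := lt_of_lt_of_le hμ0pos (hlmin.2 hμ0)
  have hcc : 0 < lmin + γ' := by linarith
  -- conjugated node matrix
  set dW : Fin N → ℝ := fun i => ψ (w i) with hdW
  have hdW2 : ∀ i, dW i * dW i = 1 := fun i => hψ2 (w i)
  have hBapply : ∀ i j, KψW i j = dW i * KW i j * dW j := by
    intro i j
    rw [hKψW, hKW]
    simp only [Matrix.of_apply, hdW]
    exact hKψab _ _
  have hBlow : ∀ x : Fin N → ℝ, lmin * (x ⬝ᵥ x) ≤ x ⬝ᵥ (KψW *ᵥ x) := by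
    intro x
    have h := hlmin.1 (fun i => dW i * x i)
    have e1 : (fun i => dW i * x i) ⬝ᵥ (fun i => dW i * x i) = x ⬝ᵥ x := by
      simp only [dotProduct]
      apply Finset.sum_congr rfl
      intro i _
      have h2 := hdW2 i
      linear_combination (x i * x i) * h2
    have e2 : (fun i => dW i * x i) ⬝ᵥ (KW *ᵥ fun i => dW i * x i) = x ⬝ᵥ (KψW *ᵥ x) := by
      simp only [dotProduct, Matrix.mulVec]
      apply Finset.sum_congr rfl
      intro i _
      rw [Finset.mul_sum, Finset.mul_sum]
      apply Finset.sum_congr rfl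
      intro j _
      rw [hBapply]
      ring
    rw [e1, e2] at h
    exact h
  set DW : Matrix (Fin N) (Fin N) ℝ := Matrix.diagonal dW with hDWdef
  have hDWDW : DW * DW = (1 : Matrix (Fin N) (Fin N) ℝ) := by
    rw [hDWdef, Matrix.diagonal_mul_diagonal]
    have h1 : (fun i => dW i * dW i) = (fun _ => (1:ℝ)) := funext hdW2
    rw [h1, Matrix.diagonal_one]
  have hBeq : KψW = DW * KW * DW := by
    ext i j
    rw [hBapply, hDWdef, Matrix.mul_diagonal, Matrix.diagonal_mul]
  have hBright : KψW * (DW * KW⁻¹ * DW) = 1 := by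
    rw [hBeq]
    calc DW * KW * DW * (DW * KW⁻¹ * DW)
        = DW * (KW * ((DW * DW) * (KW⁻¹ * DW))) := by simp only [Matrix.mul_assoc]
      _ = DW * (KW * (KW⁻¹ * DW)) := by rw [hDWDW, Matrix.one_mul]
      _ = DW * ((KW * KW⁻¹) * DW) := by simp only [Matrix.mul_assoc]
      _ = 1 := by rw [hKWinv, Matrix.one_mul, hDWDW]
  have hBinv : KψW⁻¹ = DW * KW⁻¹ * DW := Matrix.inv_eq_right_inv hBright
  have hBmul : KψW * KψW⁻¹ = 1 := by rw [hBinv]; exact hBright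
  have hBdet : IsUnit KψW.det := Matrix.isUnit_det_of_right_inverse hBright
  have hBmul' : KψW⁻¹ * KψW = 1 := Matrix.nonsing_inv_mul _ hBdet
  have hBsym : ∀ i j, KψW i j = KψW j i := fun i j => by
    rw [hBapply, hBapply, hKWsym i j]; ring
  have hBT : KψWᵀ = KψW := by
    ext i j
    rw [Matrix.transpose_apply]
    exact hBsym j i
  -- the regularized matrix A
  set A : Matrix (Fin N) (Fin N) ℝ := KψW + γ' • (1 : Matrix (Fin N) (Fin N) ℝ) with hA
  have hAapp : ∀ x : Fin N → ℝ, A *ᵥ x = KψW *ᵥ x + γ' • x := by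
    intro x
    rw [hA, Matrix.add_mulVec, Matrix.smul_mulVec, Matrix.one_mulVec]
  have hAlow : ∀ x : Fin N → ℝ, (lmin + γ') * (x ⬝ᵥ x) ≤ x ⬝ᵥ (A *ᵥ x) := by
    intro x
    rw [hAapp, dotProduct_add, dotProduct_smul, smul_eq_mul]
    have h := hBlow x
    nlinarith [h]
  have hAsym : ∀ i j, A i j = A j i := by
    intro i j
    rw [hA]
    simp only [Matrix.add_apply, Matrix.smul_apply, Matrix.one_apply]
    rw [hBsym i j]
    by_cases h : i = j
    · subst h; rfl
    · rw [if_neg h, if_neg (Ne.symm h)]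
  have hApd : A.PosDef := by
    refine Matrix.PosDef.of_dotProduct_mulVec_pos ?_ ?_
    · ext i j
      simp only [Matrix.conjTranspose_apply, star_trivial]
      exact hAsym j i
    · intro x hx
      have hxx : 0 < x ⬝ᵥ x := by
        obtain ⟨i, hi⟩ := Function.ne_iff.mp hx
        have h1 : x i * x i ≤ x ⬝ᵥ x :=
          Finset.single_le_sum (fun j _ => mul_self_nonneg (x j)) (Finset.mem_univ i)
        have h2 : 0 < x i * x i := mul_self_pos.mpr (by simpa using hi)
        linarith
      have h := hAlow x
      have hxs : star x = x := funext fun i => star_trivial _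
      rw [hxs]
      nlinarith [h, hxx, hcc]
  have hAdet : IsUnit A.det := hApd.det_pos.ne'.isUnit
  have hAmul : A * A⁻¹ = 1 := Matrix.mul_nonsing_inv _ hAdet
  have hAT : Aᵀ = A := by
    ext i j
    rw [Matrix.transpose_apply]
    exact hAsym j i
  have hAinvsym : A⁻¹ᵀ = A⁻¹ := by rw [Matrix.transpose_nonsing_inv, hAT]
  -- vectors
  set kv : Fin N → ℝ := fun i => Kψ v (w i) with hkv
  set yW : Fin N → ℝ := fun i => y (w i) with hyW
  set m : Fin N → ℝ := A⁻¹ *ᵥ kv with hm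
  have hkvAm : A *ᵥ m = kv := by rw [hm, Matrix.mulVec_mulVec, hAmul, Matrix.one_mulVec]
  have hkvBm : kv = KψW *ᵥ m + γ' • m := by rw [← hkvAm, hAapp]
  -- the comparison vector
  set vecq : (Fin N → ℝ) → (Fin n → ℝ) :=
    fun q a => (if a = v then (1:ℝ) else 0) - ∑ i, if a = w i then q i else 0 with hvecq
  have hvec_dot : ∀ (q : Fin N → ℝ) (g : Fin n → ℝ),
      (vecq q) ⬝ᵥ g = g v - ∑ i, q i * g (w i) := by
    intro q g
    have hsplit : vecq q ⬝ᵥ g = (fun a => if a = v then (1:ℝ) else 0) ⬝ᵥ g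
        - (fun a => ∑ i, if a = w i then q i else 0) ⬝ᵥ g := by
      simp only [hvecq, dotProduct, sub_mul, Finset.sum_sub_distrib]
    rw [hsplit, aux_e_dot, aux_lift_dot]
  have hvec_mulVec : ∀ (q : Fin N → ℝ) (a : Fin n),
      (Kψ *ᵥ vecq q) a = Kψ a v - ∑ j, Kψ a (w j) * q j := by
    intro q a
    have hsplit : Kψ *ᵥ vecq q = fun a =>
        (Kψ *ᵥ fun b => if b = v then (1:ℝ) else 0) a
        - (Kψ *ᵥ fun b => ∑ i, if b = w i then q i else 0) a := by
      funext a'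
      simp only [hvecq, Matrix.mulVec, dotProduct, mul_sub, Finset.sum_sub_distrib]
    rw [hsplit]
    dsimp only
    rw [aux_mulVec_e, aux_mulVec_lift]
  -- error as a dot product
  have herr : y v - ∑ i : Fin N, c i * Kψ v (w i) = (vecq m) ⬝ᵥ y := by
    have h1 : (∑ i : Fin N, c i * Kψ v (w i)) = c ⬝ᵥ kv := by
      simp [dotProduct, hkv]
    have h2 : c ⬝ᵥ kv = yW ⬝ᵥ m := by
      rw [hc, hm]
      rw [Matrix.dotProduct_mulVec yW A⁻¹ kv, ← Matrix.mulVec_transpose, hAinvsym]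
    have h3 : yW ⬝ᵥ m = ∑ i, m i * y (w i) := by
      rw [dotProduct_comm]
      simp [dotProduct, hyW]
    rw [hvec_dot m y, h1, h2, h3]
  -- Kψ is symmetric and PSD as a quadratic form
  have hKψT : Kψᵀ = Kψ := by
    ext a b
    rw [Matrix.transpose_apply]
    exact hKψsym b a
  have hKψpsd : ∀ z : Fin n → ℝ, 0 ≤ z ⬝ᵥ (Kψ *ᵥ z) := by
    intro z
    have h := hK.posSemidef.dotProduct_mulVec_nonneg (fun a => ψ a * z a)
    rw [show star (fun a => ψ a * z a) = fun a => ψ a * z a from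
      funext fun a => star_trivial _] at h
    have e : z ⬝ᵥ (Kψ *ᵥ z) = (fun a => ψ a * z a) ⬝ᵥ (K *ᵥ fun a => ψ a * z a) := by
      simp only [dotProduct, Matrix.mulVec]
      apply Finset.sum_congr rfl
      intro a _
      rw [Finset.mul_sum, Finset.mul_sum]
      apply Finset.sum_congr rfl
      intro b _
      rw [hKψab]
      ring
    rw [e]
    exact h
  -- quadratic form identity
  have hQid : ∀ q : Fin N → ℝ, (vecq q) ⬝ᵥ (Kψ *ᵥ vecq q)
      = Kψ v v - 2*(q ⬝ᵥ kv) + q ⬝ᵥ (KψW *ᵥ q) := by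
    intro q
    rw [hvec_dot q (Kψ *ᵥ vecq q)]
    rw [hvec_mulVec q v]
    have expand : (∑ i, q i * (Kψ *ᵥ vecq q) (w i))
        = (∑ i, q i * Kψ v (w i)) - ∑ i, q i * ∑ j, KψW i j * q j := by
      rw [← Finset.sum_sub_distrib]
      apply Finset.sum_congr rfl
      intro i _
      rw [hvec_mulVec q (w i), hKψsym (w i) v]
      have : ∀ j, KψW i j = Kψ (w i) (w j) := fun j => by rw [hKψW]; rfl
      simp_rw [this]
      ring
    rw [expand]
    have c1 : (∑ j, Kψ v (w j) * q j) = q ⬝ᵥ kv := by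
      simp [dotProduct, hkv, mul_comm]
    have c2 : (∑ i, q i * Kψ v (w i)) = q ⬝ᵥ kv := by
      simp [dotProduct, hkv]
    have c3 : (∑ i, q i * ∑ j, KψW i j * q j) = q ⬝ᵥ (KψW *ᵥ q) := by
      simp [dotProduct, Matrix.mulVec]
    rw [c1, c2, c3]
    ring
  -- value of the quadratic form at m
  have hmkv : m ⬝ᵥ kv = m ⬝ᵥ (KψW *ᵥ m) + γ' * (m ⬝ᵥ m) := by
    conv_lhs => rw [hkvBm]
    rw [dotProduct_add, dotProduct_smul, smul_eq_mul]
  have hQm : (vecq m) ⬝ᵥ (Kψ *ᵥ vecq m)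
      = Kψ v v - (m ⬝ᵥ (KψW *ᵥ m)) - 2*γ'*(m ⬝ᵥ m) := by
    rw [hQid m, hmkv]
    ring
  -- power function nonnegativity
  set p : Fin N → ℝ := KψW⁻¹ *ᵥ kv with hp
  have hBp : KψW *ᵥ p = kv := by rw [hp, Matrix.mulVec_mulVec, hBmul, Matrix.one_mulVec]
  have hpower : kv ⬝ᵥ p ≤ Kψ v v := by
    have h0 := hKψpsd (vecq p)
    rw [hQid p] at h0
    have h1 : p ⬝ᵥ (KψW *ᵥ p) = p ⬝ᵥ kv := by rw [hBp]
    have h2 : p ⬝ᵥ kv = kv ⬝ᵥ p := dotProduct_comm _ _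
    rw [h1, h2] at h0
    linarith [h0]
  -- bound on m ⬝ KψW⁻¹ m
  have htb := aux_inv_bound KψW hBmul hlminpos hBlow m
  set t : ℝ := m ⬝ᵥ (KψW⁻¹ *ᵥ m) with ht
  have ht0 : 0 ≤ t := htb.1
  have ht1 : lmin * t ≤ m ⬝ᵥ m := htb.2
  -- expansion of kv ⬝ p
  have hpm : p = m + γ' • (KψW⁻¹ *ᵥ m) := by
    rw [hp]
    conv_lhs => rw [hkvBm]
    rw [Matrix.mulVec_add, Matrix.mulVec_smul, Matrix.mulVec_mulVec, hBmul', Matrix.one_mulVec]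
  have hBmBinvm : (KψW *ᵥ m) ⬝ᵥ (KψW⁻¹ *ᵥ m) = m ⬝ᵥ m := by
    rw [dotProduct_comm, Matrix.dotProduct_mulVec, ← Matrix.mulVec_transpose, hBT,
      Matrix.mulVec_mulVec, hBmul, Matrix.one_mulVec]
  have hexp : kv ⬝ᵥ p = m ⬝ᵥ (KψW *ᵥ m) + 2*γ'*(m ⬝ᵥ m) + γ'^2 * t := by
    rw [hpm, dotProduct_add, dotProduct_smul, smul_eq_mul]
    have h5 : kv ⬝ᵥ m = m ⬝ᵥ (KψW *ᵥ m) + γ'*(m ⬝ᵥ m) := by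
      conv_lhs => rw [hkvBm]
      rw [add_dotProduct, smul_dotProduct, smul_eq_mul,
        dotProduct_comm (KψW *ᵥ m) m]
    have h6 : kv ⬝ᵥ (KψW⁻¹ *ᵥ m) = m ⬝ᵥ m + γ' * t := by
      conv_lhs => rw [hkvBm]
      rw [add_dotProduct, smul_dotProduct, smul_eq_mul, hBmBinvm, ht]
    rw [h5, h6]
    ring
  -- relating ψ-quantities to K-quantities
  have hKvvKψ : Kψ v v = K v v := by
    rw [hKψab]
    linear_combination (K v v) * hψ2 v
  set k0 : Fin N → ℝ := fun i => K v (w i) with hk0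
  have hPP : kv ⬝ᵥ p = k0 ⬝ᵥ (KW⁻¹ *ᵥ k0) := by
    have hkv0 : kv = ψ v • (DW *ᵥ k0) := by
      funext i
      rw [hkv]
      simp only [Pi.smul_apply, smul_eq_mul, hDWdef, Matrix.mulVec_diagonal, hk0, hdW]
      rw [hKψab]
      ring
    have hDmove : (DW * KW⁻¹ * DW) *ᵥ (DW *ᵥ k0) = DW *ᵥ (KW⁻¹ *ᵥ k0) := by
      rw [Matrix.mulVec_mulVec]
      calc (DW * KW⁻¹ * DW * DW) *ᵥ k0 = (DW * (KW⁻¹ * (DW * DW))) *ᵥ k0 := by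
            simp only [Matrix.mul_assoc]
        _ = (DW * KW⁻¹) *ᵥ k0 := by rw [hDWDW, Matrix.mul_one]
        _ = DW *ᵥ (KW⁻¹ *ᵥ k0) := by rw [← Matrix.mulVec_mulVec]
    have hdd : ∀ a b : Fin N → ℝ, (DW *ᵥ a) ⬝ᵥ (DW *ᵥ b) = a ⬝ᵥ b := by
      intro a b
      simp only [dotProduct, hDWdef, Matrix.mulVec_diagonal]
      apply Finset.sum_congr rfl
      intro i _
      linear_combination (a i * b i) * hdW2 i
    rw [hp, hBinv, hkv0, Matrix.mulVec_smul, smul_dotProduct, dotProduct_smul,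
      smul_eq_mul, smul_eq_mul, ← mul_assoc, hψ2 v, one_mul, hDmove, hdd]
  -- nonnegativity facts
  have hKvv0 : 0 ≤ K v v := by
    have h := hK.posSemidef.dotProduct_mulVec_nonneg (fun a => if a = v then (1:ℝ) else 0)
    rw [show star (fun a => if a = v then (1:ℝ) else 0) = fun a => if a = v then (1:ℝ) else 0
      from funext fun a => star_trivial _] at h
    rwa [aux_e_dot v _, aux_mulVec_e K v v] at h
  have hPsq0 : 0 ≤ K v v - k0 ⬝ᵥ (KW⁻¹ *ᵥ k0) := by
    rw [← hPP, ← hKvvKψ]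
    linarith [hpower]
  -- the key eigenvalue bound
  have hBmm : lmin * (m ⬝ᵥ m) ≤ m ⬝ᵥ (KψW *ᵥ m) := hBlow m
  have hcct : (lmin + γ')^2 * t ≤ Kψ v v := by
    have h1' : lmin * (lmin * t) ≤ lmin * (m ⬝ᵥ m) :=
      mul_le_mul_of_nonneg_left ht1 hlminpos.le
    have h2' : γ' * (lmin * t) ≤ γ' * (m ⬝ᵥ m) :=
      mul_le_mul_of_nonneg_left ht1 hγ'.le
    have hring : (lmin + γ')^2 * t = lmin*(lmin*t) + 2*(γ'*(lmin*t)) + γ'^2*t := by ring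
    linarith [h1', h2', hBmm, hpower, hexp, hring]
  -- bound on the quadratic form at m
  have hQb : (vecq m) ⬝ᵥ (Kψ *ᵥ vecq m)
      ≤ (K v v - k0 ⬝ᵥ (KW⁻¹ *ᵥ k0)) + (γ' / (lmin+γ'))^2 * K v v := by
    rw [hQm]
    have hPsqval : K v v - k0 ⬝ᵥ (KW⁻¹ *ᵥ k0)
        = Kψ v v - (m ⬝ᵥ (KψW *ᵥ m) + 2*γ'*(m ⬝ᵥ m) + γ'^2 * t) := by
      rw [← hPP, ← hexp, hKvvKψ]
    rw [hPsqval]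
    have h8 : γ'^2 * t ≤ (γ' / (lmin+γ'))^2 * K v v := by
      have hc2 : (γ' / (lmin+γ'))^2 * ((lmin+γ')^2 * t) = γ'^2 * t := by
        field_simp
      calc γ'^2*t = (γ'/(lmin+γ'))^2 * ((lmin+γ')^2 * t) := hc2.symm
        _ ≤ (γ'/(lmin+γ'))^2 * Kψ v v := mul_le_mul_of_nonneg_left hcct (by positivity)
        _ = (γ'/(lmin+γ'))^2 * K v v := by rw [hKvvKψ]
    linarith [h8]
  -- Cauchy-Schwarz with respect to Kψ
  have hKψmul : Kψ * Kψ⁻¹ = 1 := by rw [hKψinv]; exact hKψright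
  have hyb : Kψ *ᵥ (Kψ⁻¹ *ᵥ y) = y := by
    rw [Matrix.mulVec_mulVec, hKψmul, Matrix.one_mulVec]
  have hR0 : 0 ≤ y ⬝ᵥ (Kψ⁻¹ *ᵥ y) := by
    have h := hKψpsd (Kψ⁻¹ *ᵥ y)
    rw [hyb] at h
    rwa [dotProduct_comm] at h
  have hCS : ((vecq m) ⬝ᵥ y)^2 ≤ ((vecq m) ⬝ᵥ (Kψ *ᵥ vecq m)) * (y ⬝ᵥ (Kψ⁻¹ *ᵥ y)) := by
    have h := aux_cs Kψ hKψT hKψpsd (vecq m) (Kψ⁻¹ *ᵥ y)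
    rw [hyb] at h
    rwa [dotProduct_comm (Kψ⁻¹ *ᵥ y) y] at h
  -- final assembly
  have hε0 : 0 ≤ γ' * Real.sqrt (K v v) / (lmin + γ') :=
    div_nonneg (mul_nonneg hγ'.le (Real.sqrt_nonneg _)) hcc.le
  have hP0 : 0 ≤ Real.sqrt (K v v - k0 ⬝ᵥ (KW⁻¹ *ᵥ k0)) := Real.sqrt_nonneg _
  have hQle : (vecq m) ⬝ᵥ (Kψ *ᵥ vecq m)
      ≤ (Real.sqrt (K v v - k0 ⬝ᵥ (KW⁻¹ *ᵥ k0)) + γ' * Real.sqrt (K v v) / (lmin + γ'))^2 := by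
    have h1 : (γ' / (lmin+γ'))^2 * K v v = (γ' * Real.sqrt (K v v) / (lmin + γ'))^2 := by
      have hs : Real.sqrt (K v v) ^ 2 = K v v := Real.sq_sqrt hKvv0
      conv_lhs => rw [← hs]
      ring
    have h2 : Real.sqrt (K v v - k0 ⬝ᵥ (KW⁻¹ *ᵥ k0))^2 = K v v - k0 ⬝ᵥ (KW⁻¹ *ᵥ k0) :=
      Real.sq_sqrt hPsq0
    nlinarith [hQb, h1, h2, mul_nonneg hP0 hε0]
  rw [herr]
  have habs : |(vecq m) ⬝ᵥ y| = Real.sqrt (((vecq m) ⬝ᵥ y)^2) := (Real.sqrt_sq_eq_abs _).symm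
  rw [habs]
  calc Real.sqrt (((vecq m) ⬝ᵥ y)^2)
      ≤ Real.sqrt ((Real.sqrt (K v v - k0 ⬝ᵥ (KW⁻¹ *ᵥ k0))
          + γ' * Real.sqrt (K v v) / (lmin + γ'))^2 * (y ⬝ᵥ (Kψ⁻¹ *ᵥ y))) := by
        apply Real.sqrt_le_sqrt
        exact le_trans hCS (mul_le_mul_of_nonneg_right hQle hR0)
    _ = (Real.sqrt (K v v - k0 ⬝ᵥ (KW⁻¹ *ᵥ k0))
          + γ' * Real.sqrt (K v v) / (lmin + γ')) * Real.sqrt (y ⬝ᵥ (Kψ⁻¹ *ᵥ y)) := by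
        rw [Real.sqrt_mul (sq_nonneg _), Real.sqrt_sq (add_nonneg hP0 hε0)]
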